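/- Sorted-subset ordering lemma: Let ℓ'' = {q(1) < q(2) < ⋯ < q(L'')} be a subset of {1,…,l−1}, and set q(L''+1) = l. Suppose nonnegative reals α^[s] (direct strengths, nondecreasing in s) and β^[s] (interference strengths) satisfy: (i) for every q(s) ∈ ℓ'': α^[l] − β^[l] < α^[q(s)] (membership condition), (ii) TIN condition: for all s' < s in {1,…,l}, α^[s] ≥ β^[s] + α^[s'] or α^[s] ≥ 2β^[s] + α^[s'] − β^[s'], and (iii) the complement ℓ' = {1,…,l}∖ℓ'' consists of l and indices p with α^[l] − β^[l] ≥ α^[p]. Then for every s ∈ {1,…,L''}: α^[q(s+1)] − β^[q(s+1)] < α^[q(s)] and α^[q(s+1)] − 2β^[q(s+1)] ≥ α^[q(s)] − β^[q(s)]. -/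
import Mathlib


/-- Lemma 4 of the outer-bound proof, single cell: let `α s` be the direct
strength of user `s` and `β s` the interference strength from the preceding cell in the
cycle, for users `s ∈ {1,…,l}` sorted by ascending `α`. Let `q 1 < ⋯ < q L''` enumerate the
subset of `{1,…,l-1}` of users "not more noisy" than user `l`, with `q (L''+1) = l`.
Then along this chain, each user is not less noisy than its predecessor. -/
theorem stmt14 (l L'' : ℕ) (hl : 1 ≤ l) (α β : ℕ → ℝ)
    (hα : ∀ s, 0 ≤ α s) (hβ : ∀ s, 0 ≤ β s)
    (hmono : ∀ s s', 1 ≤ s → s ≤ s' → s' ≤ l → α s ≤ α s')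
    (q : ℕ → ℕ)
    (hqmono : ∀ s s', 1 ≤ s → s < s' → s' ≤ L'' → q s < q s')
    (hqrange : ∀ s, 1 ≤ s → s ≤ L'' → 1 ≤ q s ∧ q s ≤ l - 1)
    (hqtop : q (L'' + 1) = l)
    (hmember : ∀ s, 1 ≤ s → s ≤ L'' → α l - β l < α (q s))
    (hTIN : ∀ s' s, 1 ≤ s' → s' < s → s ≤ l →
      (α s ≥ β s + α s' ∨ α s ≥ 2 * β s + α s' - β s'))
    (hcompl : ∀ p, 1 ≤ p → p ≤ l → p ≠ l → (∀ s, 1 ≤ s → s ≤ L'' → q s ≠ p) →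
      α l - β l ≥ α p) :
    ∀ s, 1 ≤ s → s ≤ L'' →
      α (q (s + 1)) - β (q (s + 1)) < α (q s) ∧
      α (q (s + 1)) - 2 * β (q (s + 1)) ≥ α (q s) - β (q s) := by
  intro s hs hsL
  obtain ⟨hq1, hq2⟩ := hqrange s hs hsL
  have hqsl : q s < l := lt_of_le_of_lt hq2 (Nat.sub_lt hl one_pos)
  -- q s < q (s+1)
  have hlt : q s < q (s + 1) := by
    rcases eq_or_lt_of_le hsL with h | h
    · subst h; rw [hqtop]; exact lt_of_le_of_lt hq2 (Nat.sub_lt hl one_pos)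
    · exact hqmono s (s + 1) hs (Nat.lt_succ_self s) h
  have hql : q (s + 1) ≤ l := by
    rcases eq_or_lt_of_le hsL with h | h
    · subst h; rw [hqtop]
    · exact le_trans (hqrange (s + 1) (by omega) h).2 (Nat.sub_le l 1)
  -- first inequality
  have first : α (q (s + 1)) - β (q (s + 1)) < α (q s) := by
    rcases eq_or_lt_of_le hsL with h | h
    · subst h; rw [hqtop]; exact hmember s hs hsL
    · -- q (s+1) < l, use TIN between q (s+1) and l
      have hr := hqrange (s + 1) (by omega) h
      have hql' : q (s + 1) < l := lt_of_le_of_lt hr.2 (Nat.sub_lt hl one_pos)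
      by_contra hcon
      push_neg at hcon
      have hm := hmember s hs hsL
      rcases hTIN (q (s + 1)) l hr.1 hql' le_rfl with h1 | h1
      · have := hβ (q (s + 1))
        linarith
      · have := hβ l
        linarith
  refine ⟨first, ?_⟩
  rcases hTIN (q s) (q (s + 1)) hq1 hlt hql with h1 | h1
  · exfalso; linarith
  · linarith
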